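/- Let r ≥ 2 be an integer radix and D ∈ ℕ. For every real number t with |t| ≤ r^{-D} there exists a digit sequence e : ℕ → ℤ with |e_i| ≤ r − 1 for all i such that t = Σ_{i=0}^∞ e_i · r^{-(D+i+1)}. That is, every real number of absolute value at most r^{-D} is exactly representable by a symmetric maximally redundant signed-digit tail occupying only the positions after position D (taking D = 0, every real in [−1, 1] is representable by such a digit sequence). -/

import Mathlib

/-- Greedy digit. -/
noncomputable def srdDigit (r : ℕ) (x : ℝ) : ℤ :=
  max (-((r : ℤ) - 1)) (min ((r : ℤ) - 1) ⌊(r : ℝ) * x⌋)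

/-- Remainder sequence. -/
noncomputable def srdRem (r : ℕ) (t : ℝ) : ℕ → ℝ
  | 0 => t
  | n + 1 => (r : ℝ) * srdRem r t n - srdDigit r (srdRem r t n)

lemma srdDigit_abs_le (r : ℕ) (hr : 2 ≤ r) (x : ℝ) : |srdDigit r x| ≤ (r : ℤ) - 1 := by
  have h1 : (1 : ℤ) ≤ (r : ℤ) := by exact_mod_cast Nat.one_le_of_lt hr
  rw [abs_le]
  constructor
  · exact le_max_left _ _
  · exact max_le (by omega) (min_le_left _ _)

lemma srdRem_step_abs (r : ℕ) (hr : 2 ≤ r) (x : ℝ) (hx : |x| ≤ 1) :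
    |(r : ℝ) * x - srdDigit r x| ≤ 1 := by
  have hrR : (2 : ℝ) ≤ (r : ℝ) := by exact_mod_cast hr
  rw [abs_le] at hx ⊢
  have hf1 : ((⌊(r : ℝ) * x⌋ : ℝ)) ≤ (r : ℝ) * x := Int.floor_le _
  have hf2 : (r : ℝ) * x - 1 < ((⌊(r : ℝ) * x⌋ : ℝ)) := Int.sub_one_lt_floor _
  have hd : (srdDigit r x : ℝ) = max (-((r : ℝ) - 1)) (min ((r : ℝ) - 1) ((⌊(r : ℝ) * x⌋ : ℝ))) := by
    unfold srdDigit; push_cast; rfl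
  constructor
  · -- -1 ≤ r x - d, i.e. d ≤ r x + 1
    rw [hd, neg_le_sub_iff_le_add]
    apply max_le
    · nlinarith [hx.1]
    · calc min ((r : ℝ) - 1) ((⌊(r : ℝ) * x⌋ : ℝ)) ≤ ((⌊(r : ℝ) * x⌋ : ℝ)) := min_le_right _ _
        _ ≤ (r : ℝ) * x := hf1
        _ ≤ (r : ℝ) * x + 1 := by linarith
  · -- r x - d ≤ 1, i.e. r x - 1 ≤ d
    rw [hd]
    have hmax : (r : ℝ) * x - 1 ≤
        max (-((r : ℝ) - 1)) (min ((r : ℝ) - 1) ((⌊(r : ℝ) * x⌋ : ℝ))) := by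
      refine le_trans ?_ (le_max_right _ _)
      rcases le_total ((⌊(r : ℝ) * x⌋ : ℝ)) ((r : ℝ) - 1) with h | h
      · rw [min_eq_right h]; linarith
      · rw [min_eq_left h]; nlinarith [hx.2]
    linarith

lemma srdRem_abs_le (r : ℕ) (hr : 2 ≤ r) (t : ℝ) (ht : |t| ≤ 1) (n : ℕ) :
    |srdRem r t n| ≤ 1 := by
  induction n with
  | zero => exact ht
  | succ n ih => exact srdRem_step_abs r hr _ ih

theorem redundant_tail_representation
    (r D : ℕ) (hr : 2 ≤ r) (t : ℝ) (ht : |t| ≤ (r : ℝ) ^ (-(D : ℤ))) :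
    ∃ e : ℕ → ℤ, (∀ i, |e i| ≤ (r : ℤ) - 1) ∧
      HasSum (fun i : ℕ => (e i : ℝ) * (r : ℝ) ^ (-(D + i + 1 : ℤ))) t := by
  have hrR : (2 : ℝ) ≤ (r : ℝ) := by exact_mod_cast hr
  have hr0 : (0 : ℝ) < (r : ℝ) := by linarith
  have hrne : (r : ℝ) ≠ 0 := ne_of_gt hr0
  set s : ℕ → ℝ := srdRem r (t * (r : ℝ) ^ (D : ℤ)) with hs
  set e : ℕ → ℤ := fun i => srdDigit r (s i) with he
  have hs0 : |t * (r : ℝ) ^ (D : ℤ)| ≤ 1 := by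
    rw [abs_mul, abs_of_pos (zpow_pos hr0 _)]
    calc |t| * (r : ℝ) ^ (D : ℤ) ≤ (r : ℝ) ^ (-(D : ℤ)) * (r : ℝ) ^ (D : ℤ) := by
          apply mul_le_mul_of_nonneg_right ht (le_of_lt (zpow_pos hr0 _))
      _ = 1 := by rw [← zpow_add₀ hrne]; simp
  have hsb : ∀ n, |s n| ≤ 1 := srdRem_abs_le r hr _ hs0
  have heb : ∀ i, |e i| ≤ (r : ℤ) - 1 := fun i => srdDigit_abs_le r hr _
  set f : ℕ → ℝ := fun i : ℕ => (e i : ℝ) * (r : ℝ) ^ (-(D + i + 1 : ℤ)) with hf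
  -- partial sum identity
  have key : ∀ n : ℕ, t - ∑ i ∈ Finset.range n, f i = s n * (r : ℝ) ^ (-(D + n : ℤ)) := by
    intro n
    induction n with
    | zero =>
      simp only [Finset.range_zero, Finset.sum_empty, sub_zero, Nat.cast_zero, add_zero]
      show t = srdRem r (t * (r : ℝ) ^ (D : ℤ)) 0 * (r : ℝ) ^ (-(D : ℤ))
      rw [srdRem, mul_assoc, ← zpow_add₀ hrne]
      simp
    | succ n ih =>
      rw [Finset.sum_range_succ, ← sub_sub, ih]
      have hstep : s (n + 1) = (r : ℝ) * s n - (e n : ℝ) := rfl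
      have hz : (r : ℝ) ^ (-(D + n : ℤ)) = (r : ℝ) ^ (-(D + (n : ℤ) + 1)) * (r : ℝ) := by
        rw [← zpow_add_one₀ hrne]; ring_nf
      have hcast : (-(D + (n : ℕ) + 1 : ℤ)) = (-(D + (n : ℤ) + 1)) := by push_cast; ring
      push_cast [hstep, hz, hcast, hf]
      ring
  have hratio : |(r : ℝ)⁻¹| < 1 := by
    rw [abs_of_pos (by positivity)]
    rw [inv_lt_one_iff₀]; right; linarith
  -- summability
  have hsummable : Summable f := by
    apply Summable.of_abs
    have hg : Summable (fun i : ℕ => ((r : ℝ) - 1) * (r : ℝ) ^ (-(D + 1 : ℤ)) * ((r : ℝ)⁻¹) ^ i) :=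
      (summable_geometric_of_lt_one (by positivity) (by rw [abs_of_pos (by positivity)] at hratio; exact hratio)).mul_left _
    apply Summable.of_nonneg_of_le (fun i => abs_nonneg _) _ hg
    intro i
    rw [hf]
    simp only [abs_mul]
    have h1 : |((e i : ℝ))| ≤ (r : ℝ) - 1 := by exact_mod_cast heb i
    have h2 : |(r : ℝ) ^ (-(D + i + 1 : ℤ))| = (r : ℝ) ^ (-(D + 1 : ℤ)) * ((r : ℝ)⁻¹) ^ i := by
      have hp : ((r : ℝ)⁻¹) ^ i = (r : ℝ) ^ (-(i : ℤ)) := by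
        rw [zpow_neg, zpow_natCast, inv_pow]
      rw [abs_of_pos (zpow_pos hr0 _), hp, ← zpow_add₀ hrne]
      congr 1; push_cast; ring
    rw [h2]
    have h3 : (0 : ℝ) ≤ (r : ℝ) ^ (-(D + 1 : ℤ)) * ((r : ℝ)⁻¹) ^ i := by positivity
    calc |((e i : ℝ))| * ((r : ℝ) ^ (-(D + 1 : ℤ)) * ((r : ℝ)⁻¹) ^ i)
        ≤ ((r : ℝ) - 1) * ((r : ℝ) ^ (-(D + 1 : ℤ)) * ((r : ℝ)⁻¹) ^ i) :=
          mul_le_mul_of_nonneg_right h1 h3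
      _ = ((r : ℝ) - 1) * (r : ℝ) ^ (-(D + 1 : ℤ)) * ((r : ℝ)⁻¹) ^ i := by ring
  -- partial sums tend to t
  have htend : Filter.Tendsto (fun n => ∑ i ∈ Finset.range n, f i) Filter.atTop (nhds t) := by
    have h0 : Filter.Tendsto (fun n : ℕ => s n * (r : ℝ) ^ (-(D + n : ℤ))) Filter.atTop (nhds 0) := by
      refine squeeze_zero_norm (a := fun n : ℕ => (r : ℝ) ^ (-(D : ℤ)) * ((r : ℝ)⁻¹) ^ n)
        (fun n => ?_) ?_
      ·
        rw [Real.norm_eq_abs, abs_mul]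
        have h2 : |(r : ℝ) ^ (-(D + n : ℤ))| = (r : ℝ) ^ (-(D : ℤ)) * ((r : ℝ)⁻¹) ^ n := by
          have hp : ((r : ℝ)⁻¹) ^ n = (r : ℝ) ^ (-(n : ℤ)) := by
            rw [zpow_neg, zpow_natCast, inv_pow]
          rw [abs_of_pos (zpow_pos hr0 _), hp, ← zpow_add₀ hrne]
          congr 1; push_cast; ring
        rw [h2]
        calc |s n| * ((r : ℝ) ^ (-(D : ℤ)) * ((r : ℝ)⁻¹) ^ n)
            ≤ 1 * ((r : ℝ) ^ (-(D : ℤ)) * ((r : ℝ)⁻¹) ^ n) :=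
              mul_le_mul_of_nonneg_right (hsb n) (by positivity)
          _ = (r : ℝ) ^ (-(D : ℤ)) * ((r : ℝ)⁻¹) ^ n := by ring
      · have := tendsto_pow_atTop_nhds_zero_of_abs_lt_one hratio
        simpa using this.const_mul ((r : ℝ) ^ (-(D : ℤ)))
    have : Filter.Tendsto (fun n : ℕ => t - s n * (r : ℝ) ^ (-(D + n : ℤ))) Filter.atTop (nhds (t - 0)) :=
      Filter.Tendsto.sub tendsto_const_nhds h0
    simp only [sub_zero] at this
    convert this using 2 with n
    have := key n
    linarith
  have hts := hsummable.hasSum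
  have := hts.tendsto_sum_nat
  have heq : ∑' i, f i = t := tendsto_nhds_unique this htend
  exact ⟨e, heb, heq ▸ hts⟩
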